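/- arXiv:1508.04681 — 2 statements merged into one kernel-verified Lean document; each statement's English description precedes it below -/
import Mathlib

section
/- Let β1,…,β22 denote the standard basis of ℤ²² and consider the eleven vectors v1 = β1+β2+β4+β6+β10, v2 = β2+β3+β4+β6+β18, v3 = β2+β4+β5+2β6+β13+β21, v4 = β7, v5 = β9, v6 = β11, v7 = β15, v8 = β17, v9 = β19, v10 = β14, v11 = β22. Then the 11×11 Gram matrix with (i,j)-entry v_iᵀ M_{K3} v_j equals M_{3,3,2} (with index order E_x, E_y, E_z, C_{x,1}, C_{x,2}, C_{x,3}, C_{y,1}, C_{y,2}, C_{y,3}, C_{z,1}, C_{z,2}), and the family v1,…,v11 extends to a ℤ-basis of ℤ²²; in particular the quotient ℤ²²/span_ℤ(v1,…,v11) is torsion-free. -/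
open Matrix

/-- Axis (0 = x, 1 = y, 2 = z) of a basis index `t ≥ 3` (curve classes). -/
def axOf (k l : ℕ) (t : ℕ) : ℕ :=
  if t < 3 + k then 0 else if t < 3 + k + l then 1 else 2

/-- The intersection matrix `M_{k,l,m}` in the basis
`E_x, E_y, E_z, C_{x,1},…,C_{x,k}, C_{y,1},…,C_{y,l}, C_{z,1},…,C_{z,m}`. -/
def MM (k l m : ℕ) : Matrix (Fin (3 + k + l + m)) (Fin (3 + k + l + m)) ℤ :=
  fun i j =>
    if (i : ℕ) < 3 then
      if (j : ℕ) < 3 then (if i = j then 0 else 2)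
      else (if (i : ℕ) = axOf k l j then 1 else 0)
    else
      if (j : ℕ) < 3 then (if (j : ℕ) = axOf k l i then 1 else 0)
      else (if i = j then -2 else 0)

/-- Block index of `t ∈ {0,…,21}` for the decomposition `M₂ ⊕ M₂ ⊕ M₂ ⊕ M₈ ⊕ M₈`. -/
def blkOf (t : ℕ) : ℕ :=
  if t < 2 then 0 else if t < 4 then 1 else if t < 6 then 2 else if t < 14 then 3 else 4

/-- Offset of `t ∈ {0,…,21}` within its block. -/
def offOf (t : ℕ) : ℕ :=
  if t < 2 then t else if t < 4 then t - 2 else if t < 6 then t - 4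
  else if t < 14 then t - 6 else t - 14

/-- The entries of the 8×8 block `M₈` (0-indexed): diagonal `−2`, entry `1` at the
(1-indexed) pairs `(1,4),(2,3),(3,4),(4,5),(5,6),(6,7),(7,8)` and symmetrically. -/
def M8e (i j : ℕ) : ℤ :=
  if i = j then -2
  else if (min i j, max i j) ∈
      [((0 : ℕ), (3 : ℕ)), (1, 2), (2, 3), (3, 4), (4, 5), (5, 6), (6, 7)] then 1
  else 0

/-- The K3 lattice matrix `M_{K3} = M₂ ⊕ M₂ ⊕ M₂ ⊕ M₈ ⊕ M₈`, where `M₂ = [[0,1],[1,0]]`. -/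
def MK3 : Matrix (Fin 22) (Fin 22) ℤ :=
  fun i j =>
    if blkOf i ≠ blkOf j then 0
    else if blkOf i < 3 then (if i = j then 0 else 1)
    else M8e (offOf i) (offOf j)

/-- The standard basis vector `β_t` (1-indexed, `t ∈ {1,…,22}`) of `ℤ²²`. -/
def bv (t : ℕ) : Fin 22 → ℤ := fun i => if (i : ℕ) + 1 = t then 1 else 0

/-- The eleven vectors `𝓑_{3,3,2} ⊆ ℤ²²`. -/
def v332 : Fin 11 → (Fin 22 → ℤ) :=
  ![bv 1 + bv 2 + bv 4 + bv 6 + bv 10,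
    bv 2 + bv 3 + bv 4 + bv 6 + bv 18,
    bv 2 + bv 4 + bv 5 + 2 • bv 6 + bv 13 + bv 21,
    bv 7, bv 9, bv 11, bv 15, bv 17, bv 19, bv 14, bv 22]

def Amat : Matrix (Fin 22) (Fin 22) ℤ := !![1, 0, 0, 0, 0, 0, 0, 0, 0, 0, 0, 1, 0, 0, 0, 0, 0, 0, 0, 0, 0, 0;
  1, 1, 1, 0, 0, 0, 0, 0, 0, 0, 0, 0, 1, 0, 0, 0, 0, 0, 0, 0, 0, 0;
  0, 1, 0, 0, 0, 0, 0, 0, 0, 0, 0, 0, 0, 0, 0, 0, 0, 0, 0, 0, 0, 0;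
  1, 1, 1, 0, 0, 0, 0, 0, 0, 0, 0, 0, 0, 1, 0, 0, 0, 0, 0, 0, 0, 0;
  0, 0, 1, 0, 0, 0, 0, 0, 0, 0, 0, 0, 0, 0, 0, 0, 0, 0, 0, 0, 0, 0;
  1, 1, 2, 0, 0, 0, 0, 0, 0, 0, 0, 0, 0, 0, 1, 0, 0, 0, 0, 0, 0, 0;
  0, 0, 0, 1, 0, 0, 0, 0, 0, 0, 0, 0, 0, 0, 0, 0, 0, 0, 0, 0, 0, 0;
  0, 0, 0, 0, 0, 0, 0, 0, 0, 0, 0, 0, 0, 0, 0, 1, 0, 0, 0, 0, 0, 0;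
  0, 0, 0, 0, 1, 0, 0, 0, 0, 0, 0, 0, 0, 0, 0, 0, 0, 0, 0, 0, 0, 0;
  1, 0, 0, 0, 0, 0, 0, 0, 0, 0, 0, 0, 0, 0, 0, 0, 0, 0, 0, 0, 0, 0;
  0, 0, 0, 0, 0, 1, 0, 0, 0, 0, 0, 0, 0, 0, 0, 0, 0, 0, 0, 0, 0, 0;
  0, 0, 0, 0, 0, 0, 0, 0, 0, 0, 0, 0, 0, 0, 0, 0, 1, 0, 0, 0, 0, 0;
  0, 0, 1, 0, 0, 0, 0, 0, 0, 0, 0, 0, 0, 0, 0, 0, 0, 1, 0, 0, 0, 0;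
  0, 0, 0, 0, 0, 0, 0, 0, 0, 1, 0, 0, 0, 0, 0, 0, 0, 0, 0, 0, 0, 0;
  0, 0, 0, 0, 0, 0, 1, 0, 0, 0, 0, 0, 0, 0, 0, 0, 0, 0, 0, 0, 0, 0;
  0, 0, 0, 0, 0, 0, 0, 0, 0, 0, 0, 0, 0, 0, 0, 0, 0, 0, 1, 0, 0, 0;
  0, 0, 0, 0, 0, 0, 0, 1, 0, 0, 0, 0, 0, 0, 0, 0, 0, 0, 0, 0, 0, 0;
  0, 1, 0, 0, 0, 0, 0, 0, 0, 0, 0, 0, 0, 0, 0, 0, 0, 0, 0, 1, 0, 0;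
  0, 0, 0, 0, 0, 0, 0, 0, 1, 0, 0, 0, 0, 0, 0, 0, 0, 0, 0, 0, 0, 0;
  0, 0, 0, 0, 0, 0, 0, 0, 0, 0, 0, 0, 0, 0, 0, 0, 0, 0, 0, 0, 1, 0;
  0, 0, 1, 0, 0, 0, 0, 0, 0, 0, 0, 0, 0, 0, 0, 0, 0, 0, 0, 0, 0, 1;
  0, 0, 0, 0, 0, 0, 0, 0, 0, 0, 1, 0, 0, 0, 0, 0, 0, 0, 0, 0, 0, 0]

def Bmat : Matrix (Fin 22) (Fin 22) ℤ := !![0, 0, 0, 0, 0, 0, 0, 0, 0, 1, 0, 0, 0, 0, 0, 0, 0, 0, 0, 0, 0, 0;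
  0, 0, 1, 0, 0, 0, 0, 0, 0, 0, 0, 0, 0, 0, 0, 0, 0, 0, 0, 0, 0, 0;
  0, 0, 0, 0, 1, 0, 0, 0, 0, 0, 0, 0, 0, 0, 0, 0, 0, 0, 0, 0, 0, 0;
  0, 0, 0, 0, 0, 0, 1, 0, 0, 0, 0, 0, 0, 0, 0, 0, 0, 0, 0, 0, 0, 0;
  0, 0, 0, 0, 0, 0, 0, 0, 1, 0, 0, 0, 0, 0, 0, 0, 0, 0, 0, 0, 0, 0;
  0, 0, 0, 0, 0, 0, 0, 0, 0, 0, 1, 0, 0, 0, 0, 0, 0, 0, 0, 0, 0, 0;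
  0, 0, 0, 0, 0, 0, 0, 0, 0, 0, 0, 0, 0, 0, 1, 0, 0, 0, 0, 0, 0, 0;
  0, 0, 0, 0, 0, 0, 0, 0, 0, 0, 0, 0, 0, 0, 0, 0, 1, 0, 0, 0, 0, 0;
  0, 0, 0, 0, 0, 0, 0, 0, 0, 0, 0, 0, 0, 0, 0, 0, 0, 0, 1, 0, 0, 0;
  0, 0, 0, 0, 0, 0, 0, 0, 0, 0, 0, 0, 0, 1, 0, 0, 0, 0, 0, 0, 0, 0;
  0, 0, 0, 0, 0, 0, 0, 0, 0, 0, 0, 0, 0, 0, 0, 0, 0, 0, 0, 0, 0, 1;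
  1, 0, 0, 0, 0, 0, 0, 0, 0, -1, 0, 0, 0, 0, 0, 0, 0, 0, 0, 0, 0, 0;
  0, 1, -1, 0, -1, 0, 0, 0, 0, -1, 0, 0, 0, 0, 0, 0, 0, 0, 0, 0, 0, 0;
  0, 0, -1, 1, -1, 0, 0, 0, 0, -1, 0, 0, 0, 0, 0, 0, 0, 0, 0, 0, 0, 0;
  0, 0, -1, 0, -2, 1, 0, 0, 0, -1, 0, 0, 0, 0, 0, 0, 0, 0, 0, 0, 0, 0;
  0, 0, 0, 0, 0, 0, 0, 1, 0, 0, 0, 0, 0, 0, 0, 0, 0, 0, 0, 0, 0, 0;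
  0, 0, 0, 0, 0, 0, 0, 0, 0, 0, 0, 1, 0, 0, 0, 0, 0, 0, 0, 0, 0, 0;
  0, 0, 0, 0, -1, 0, 0, 0, 0, 0, 0, 0, 1, 0, 0, 0, 0, 0, 0, 0, 0, 0;
  0, 0, 0, 0, 0, 0, 0, 0, 0, 0, 0, 0, 0, 0, 0, 1, 0, 0, 0, 0, 0, 0;
  0, 0, -1, 0, 0, 0, 0, 0, 0, 0, 0, 0, 0, 0, 0, 0, 0, 1, 0, 0, 0, 0;
  0, 0, 0, 0, 0, 0, 0, 0, 0, 0, 0, 0, 0, 0, 0, 0, 0, 0, 0, 1, 0, 0;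
  0, 0, 0, 0, -1, 0, 0, 0, 0, 0, 0, 0, 0, 0, 0, 0, 0, 0, 0, 0, 1, 0]


set_option maxHeartbeats 4000000 in
set_option maxRecDepth 40000 in
/-- The Gram matrix of the eleven vectors in `𝓑_{3,3,2}` with respect to `M_{K3}` is
`M_{3,3,2}`, the family extends to a `ℤ`-basis of `ℤ²²`, and the quotient of `ℤ²²`
by its span is torsion-free. -/
theorem B332_primitive :
    (∀ i j : Fin 11, v332 i ⬝ᵥ MK3.mulVec (v332 j) = MM 3 3 2 i j) ∧
    (∃ b : Module.Basis (Fin 22) ℤ (Fin 22 → ℤ),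
      ∀ i : Fin 11, b (Fin.castLE (by norm_num) i) = v332 i) ∧
    (∀ (n : ℤ) (x : (Fin 22 → ℤ) ⧸ Submodule.span ℤ (Set.range v332)),
      n ≠ 0 → n • x = 0 → x = 0) := by
  have hAB : Amat * Bmat = 1 := by decide
  have hinv : Invertible Amat := invertibleOfRightInverse _ _ hAB
  have h11 : (11 : ℕ) ≤ 22 := by norm_num
  let b : Module.Basis (Fin 22) ℤ (Fin 22 → ℤ) :=
    (Pi.basisFun ℤ (Fin 22)).map (Amat.toLinearEquiv' hinv)
  have hb : ∀ i : Fin 22, b i = fun j => Amat j i := by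
    intro i
    show Matrix.toLin' Amat (Pi.basisFun ℤ (Fin 22) i) = _
    funext j
    simp [Matrix.toLin'_apply, Matrix.mulVec_single]
  have hcols : ∀ p : Fin 11, ∀ j : Fin 22,
      Amat j (Fin.castLE (by norm_num) p) = v332 p j := by decide
  have hvb : ∀ i : Fin 11, b (Fin.castLE h11 i) = v332 i := by
    intro i
    rw [hb]
    funext j
    exact hcols i j
  have hrange : Set.range v332 = b '' Set.range (Fin.castLE h11) := by
    rw [← Set.range_comp]
    exact congrArg Set.range (funext fun i => (hvb i).symm)
  refine ⟨by
    letI : ∀ i : Fin 11, DecidablePred fun j : Fin 11 => v332 i ⬝ᵥ MK3 *ᵥ v332 j = MM 3 3 2 i j :=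
      fun i j => Int.decEq _ _
    decide, ⟨b, hvb⟩, ?_⟩
  intro n x hn hx
  obtain ⟨y, rfl⟩ := Submodule.Quotient.mk_surjective _ x
  rw [← Submodule.Quotient.mk_smul, Submodule.Quotient.mk_eq_zero, hrange,
    Module.Basis.mem_span_image] at hx
  rw [Submodule.Quotient.mk_eq_zero, hrange, Module.Basis.mem_span_image]
  intro i hi
  refine hx (Finsupp.mem_support_iff.mpr ?_)
  rw [_root_.map_smul, Finsupp.smul_apply, smul_eq_mul]
  exact mul_ne_zero hn (Finsupp.mem_support_iff.mp hi)
end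

section
/- Let ρ be the spectral radius of the 9×9 integer matrix F_{2,2,2}, i.e., the maximum modulus of the complex roots of its characteristic polynomial. Then ρ is a real root of t⁴ − 8t³ + 10t² − 8t + 1 and satisfies 6 < ρ < 7. -/
open Matrix

/-- The matrix of `T_x` in the basis
`E_x, E_y, E_z, C_{x,1},…,C_{x,k}, C_{y,1},…,C_{y,l}, C_{z,1},…,C_{z,m}`:
`T_x` fixes `E_y`, `E_z` and each `C_{x,i}`, sends `C_{y,i} ↦ E_z − C_{y,i}`,
`C_{z,i} ↦ E_y − C_{z,i}`, and `E_x ↦ −E_x + 2E_y + 2E_z − (C_{x,1}+…+C_{x,k})`. -/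
def Tx (k l m : ℕ) : Matrix (Fin (3 + k + l + m)) (Fin (3 + k + l + m)) ℤ :=
  fun i j =>
    if (j : ℕ) = 0 then
      if (i : ℕ) = 0 then -1
      else if (i : ℕ) < 3 then 2
      else if axOf k l i = 0 then -1 else 0
    else if (j : ℕ) < 3 then (if i = j then 1 else 0)
    else if axOf k l j = 0 then (if i = j then 1 else 0)
    else if axOf k l j = 1 then (if (i : ℕ) = 2 then 1 else if i = j then -1 else 0)
    else (if (i : ℕ) = 1 then 1 else if i = j then -1 else 0)

/-- The matrix of `T_y`: it fixes `E_x`, `E_z` and each `C_{y,i}`, sends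
`C_{x,i} ↦ E_z − C_{x,i}`, `C_{z,i} ↦ E_x − C_{z,i}`, and
`E_y ↦ 2E_x − E_y + 2E_z − (C_{y,1}+…+C_{y,l})`. -/
def Ty (k l m : ℕ) : Matrix (Fin (3 + k + l + m)) (Fin (3 + k + l + m)) ℤ :=
  fun i j =>
    if (j : ℕ) = 1 then
      if (i : ℕ) = 1 then -1
      else if (i : ℕ) < 3 then 2
      else if axOf k l i = 1 then -1 else 0
    else if (j : ℕ) < 3 then (if i = j then 1 else 0)
    else if axOf k l j = 1 then (if i = j then 1 else 0)
    else if axOf k l j = 0 then (if (i : ℕ) = 2 then 1 else if i = j then -1 else 0)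
    else (if (i : ℕ) = 0 then 1 else if i = j then -1 else 0)

/-- The matrix of `T_z`: it fixes `E_x`, `E_y` and each `C_{z,i}`, sends
`C_{x,i} ↦ E_y − C_{x,i}`, `C_{y,i} ↦ E_x − C_{y,i}`, and
`E_z ↦ 2E_x + 2E_y − E_z − (C_{z,1}+…+C_{z,m})`. -/
def Tz (k l m : ℕ) : Matrix (Fin (3 + k + l + m)) (Fin (3 + k + l + m)) ℤ :=
  fun i j =>
    if (j : ℕ) = 2 then
      if (i : ℕ) = 2 then -1
      else if (i : ℕ) < 3 then 2
      else if axOf k l i = 2 then -1 else 0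
    else if (j : ℕ) < 3 then (if i = j then 1 else 0)
    else if axOf k l j = 2 then (if i = j then 1 else 0)
    else if axOf k l j = 0 then (if (i : ℕ) = 1 then 1 else if i = j then -1 else 0)
    else (if (i : ℕ) = 0 then 1 else if i = j then -1 else 0)

/-- The matrix of `F = T_z ∘ T_y ∘ T_x`. -/
def Fm (k l m : ℕ) : Matrix (Fin (3 + k + l + m)) (Fin (3 + k + l + m)) ℤ :=
  Tz k l m * Ty k l m * Tx k l m

/-- The characteristic polynomial (over `ℂ`) of the integer matrix `F_{k,l,m}`. -/
noncomputable def cpF (k l m : ℕ) : Polynomial ℂ :=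
  Matrix.charpoly ((Fm k l m).map (fun x => (x : ℂ)))

section SpecRadAux

open Polynomial

/-- The explicit matrix of `F_{2,2,2}`. -/
def M0 : Matrix (Fin 9) (Fin 9) ℤ :=
  !![7,4,2,2,2,1,1,3,3; 8,3,2,1,1,2,2,3,3; -4,-2,-1,-1,-1,-1,-1,-2,-2;
     -1,0,0,1,0,0,0,0,0; -1,0,0,0,1,0,0,0,0; 2,1,0,0,0,1,0,1,1;
     2,1,0,0,0,0,1,1,1; -4,-2,-1,-1,-1,-1,-1,-1,-2; -4,-2,-1,-1,-1,-1,-1,-2,-1]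

instance : DecidableEq (Matrix (Fin 9) (Fin 9) ℤ) :=
  fun A B => haveI := (@Fintype.decidableForallFintype _ _ (fun i => @Fintype.decidableForallFintype _ _ (fun j => Int.decEq (A i j) (B i j)) _) _); decidable_of_iff (∀ i j, (A i j : ℤ) = B i j)
    ⟨fun h => Matrix.ext h, fun h i j => by rw [h]⟩

lemma Fm_eq_M0 : Fm 2 2 2 = M0 := by decide

lemma hannZ : M0^6 + 9 • M0^4 + 8 • M0 = 8 • M0^5 + 9 • M0^2 + 1 := by decide

/-- The complex version of `M0`. -/
noncomputable def A0 : Matrix (Fin 9) (Fin 9) ℂ :=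
  (Int.castRingHom ℂ).mapMatrix M0

lemma hannC : A0^6 + (9:ℂ) • A0^4 + (8:ℂ) • A0 = (8:ℂ) • A0^5 + (9:ℂ) • A0^2 + 1 := by
  have h := congrArg ((Int.castRingHom ℂ).mapMatrix) hannZ
  simp only [map_add, map_pow, map_nsmul, _root_.map_one] at h
  have h9 : ∀ X : Matrix (Fin 9) (Fin 9) ℂ, (9:ℕ) • X = (9:ℂ) • X := fun X =>
    (Nat.cast_smul_eq_nsmul ℂ 9 X).symm.trans (by norm_num)
  have h8 : ∀ X : Matrix (Fin 9) (Fin 9) ℂ, (8:ℕ) • X = (8:ℂ) • X := fun X =>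
    (Nat.cast_smul_eq_nsmul ℂ 8 X).symm.trans (by norm_num)
  rw [h9, h8, h8, h9] at h
  exact h

lemma cpF_eq : cpF 2 2 2 = A0.charpoly := by
  have : (Fm 2 2 2).map (fun x => (x : ℂ)) = A0 := by
    rw [Fm_eq_M0]; rfl
  rw [cpF, this]

lemma eval_charpoly9 {n : Type*} [Fintype n] [DecidableEq n] (M : Matrix n n ℂ) (t : ℂ) :
    M.charpoly.eval t = (t • (1 : Matrix n n ℂ) - M).det := by
  rw [Matrix.charpoly, eval_det, matPolyEquiv_charmatrix, eval_sub, eval_X, eval_C,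
    Matrix.scalar_apply, Matrix.smul_one_eq_diagonal]

lemma isRoot_iff_eigen {n : Type*} [Fintype n] [DecidableEq n] (M : Matrix n n ℂ) (t : ℂ) :
    M.charpoly.IsRoot t ↔ ∃ v : n → ℂ, v ≠ 0 ∧ M *ᵥ v = t • v := by
  rw [Polynomial.IsRoot, eval_charpoly9, ← Matrix.exists_mulVec_eq_zero_iff]
  constructor
  · rintro ⟨v, hv0, hv⟩
    refine ⟨v, hv0, ?_⟩
    rw [Matrix.sub_mulVec, Matrix.smul_mulVec, Matrix.one_mulVec, sub_eq_zero] at hv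
    exact hv.symm
  · rintro ⟨v, hv0, hv⟩
    exact ⟨v, hv0, by
      rw [Matrix.sub_mulVec, Matrix.smul_mulVec, Matrix.one_mulVec, hv, sub_self]⟩

lemma eigen_pow {M : Matrix (Fin 9) (Fin 9) ℂ} {t : ℂ} {v : Fin 9 → ℂ}
    (hv : M *ᵥ v = t • v) (k : ℕ) : (M ^ k) *ᵥ v = t ^ k • v := by
  induction k with
  | zero => simp [Matrix.one_mulVec]
  | succ n ih =>
    rw [pow_succ, ← Matrix.mulVec_mulVec, hv, Matrix.mulVec_smul, ih, smul_smul, pow_succ]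
    ring_nf

/-- Every root of the characteristic polynomial satisfies the sextic. -/
lemma root_sextic {z : ℂ} (hz : (cpF 2 2 2).IsRoot z) :
    (z - 1) * (z + 1) * (z^4 - 8*z^3 + 10*z^2 - 8*z + 1) = 0 := by
  rw [cpF_eq, isRoot_iff_eigen] at hz
  obtain ⟨v, hv0, hv⟩ := hz
  obtain ⟨i, hi⟩ := Function.ne_iff.mp hv0
  have hi' : v i ≠ 0 := by simpa using hi
  have h := congrFun (congrArg (fun M => M *ᵥ v) hannC) i
  simp only [Matrix.add_mulVec, Matrix.smul_mulVec, eigen_pow hv, pow_one,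
    Matrix.one_mulVec, Pi.add_apply, Pi.smul_apply, smul_eq_mul] at h
  have hv1 := congrFun hv i
  simp only [Pi.smul_apply, smul_eq_mul] at hv1
  have key : (z^6 + 9*z^4 + 8*z) * v i = (8*z^5 + 9*z^2 + 1) * v i := by
    linear_combination h - 8 * hv1
  have hfin : z^6 + 9*z^4 + 8*z = 8*z^5 + 9*z^2 + 1 := mul_right_cancel₀ hi' key
  linear_combination hfin

end SpecRadAux
section SpecRadAux2

open Polynomial

noncomputable def aR : ℝ := 4 + 2*Real.sqrt 2
noncomputable def rR : ℝ := (aR + Real.sqrt (aR^2 - 4))/2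

lemma sqrt2_sq : Real.sqrt 2 ^ 2 = 2 := Real.sq_sqrt (by norm_num)

lemma sqrt2_bounds : 1.414 < Real.sqrt 2 ∧ Real.sqrt 2 < 1.415 := by
  have h := sqrt2_sq
  have h0 := Real.sqrt_nonneg 2
  constructor <;> nlinarith

lemma aR_bounds : 6.828 < aR ∧ aR < 6.83 := by
  obtain ⟨h1, h2⟩ := sqrt2_bounds
  constructor <;> (unfold aR; nlinarith)

lemma aR_sq : aR^2 - 8*aR + 8 = 0 := by
  unfold aR; linear_combination 4 * sqrt2_sq

lemma sR_sq : Real.sqrt (aR^2 - 4) ^ 2 = aR^2 - 4 := by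
  refine Real.sq_sqrt ?_
  obtain ⟨h1, _⟩ := aR_bounds
  nlinarith

lemma rR_quad : rR^2 - aR*rR + 1 = 0 := by
  unfold rR
  have hs := sR_sq
  field_simp
  nlinarith [hs]

lemma rR_quartic : rR^4 - 8*rR^3 + 10*rR^2 - 8*rR + 1 = 0 := by
  linear_combination (rR^2 - (8 - aR)*rR + 1) * rR_quad + rR^2 * aR_sq

lemma rR_bounds : 6.6 < rR ∧ rR < 6.7 := by
  obtain ⟨ha1, ha2⟩ := aR_bounds
  have hs := sR_sq
  have hs0 := Real.sqrt_nonneg (aR^2 - 4)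
  constructor <;> (unfold rR; nlinarith)

lemma aR_sub_rR_nonneg : 0 ≤ aR - rR := by
  obtain ⟨ha1, ha2⟩ := aR_bounds
  have hs := sR_sq
  have hs0 := Real.sqrt_nonneg (aR^2 - 4)
  unfold rR
  nlinarith

lemma aR_sub_rR_le : aR - rR ≤ rR := by
  have hs0 := Real.sqrt_nonneg (aR^2 - 4)
  unfold rR
  nlinarith

/-- `rR` is a root of the characteristic polynomial. -/
lemma rR_isRoot : (cpF 2 2 2).IsRoot (rR : ℂ) := by
  rw [cpF_eq, isRoot_iff_eigen]
  set c : ℂ := (rR : ℂ) with hc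
  have hc4 : c^4 = 8*c^3 - 10*c^2 + 8*c - 1 := by
    have h2 : c^4 - 8*c^3 + 10*c^2 - 8*c + 1
        = ((rR^4 - 8*rR^3 + 10*rR^2 - 8*rR + 1 : ℝ) : ℂ) := by
      rw [hc]; push_cast; ring
    rw [rR_quartic, Complex.ofReal_zero] at h2
    linear_combination h2
  set v : Fin 9 → ℂ := ![15 - 23*c + 23*c^2 - 3*c^3, -31 + 41*c - 39*c^2 + 5*c^3,
    -28 + 40*c - 32*c^2 + 4*c^3, 18 - 29*c + 24*c^2 - 3*c^3, 18 - 29*c + 24*c^2 - 3*c^3,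
    -9 + 12*c - 15*c^2 + 2*c^3, -9 + 12*c - 15*c^2 + 2*c^3, 4, 4] with hvdef
  refine ⟨![15 - 23*c + 23*c^2 - 3*c^3, -31 + 41*c - 39*c^2 + 5*c^3,
    -28 + 40*c - 32*c^2 + 4*c^3, 18 - 29*c + 24*c^2 - 3*c^3, 18 - 29*c + 24*c^2 - 3*c^3,
    -9 + 12*c - 15*c^2 + 2*c^3, -9 + 12*c - 15*c^2 + 2*c^3, 4, 4], ?_, ?_⟩
  · intro h
    have h7 := congrFun h 7
    rw [show (![15 - 23*c + 23*c^2 - 3*c^3, -31 + 41*c - 39*c^2 + 5*c^3,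
    -28 + 40*c - 32*c^2 + 4*c^3, 18 - 29*c + 24*c^2 - 3*c^3, 18 - 29*c + 24*c^2 - 3*c^3,
    -9 + 12*c - 15*c^2 + 2*c^3, -9 + 12*c - 15*c^2 + 2*c^3, 4, 4] : Fin 9 → ℂ) 7 = 4 from rfl, Pi.zero_apply] at h7
    exact absurd h7 (by norm_num)
  · have hA : ∀ i j, A0 i j = ((M0 i j : ℤ) : ℂ) := fun i j => rfl
    funext i
    fin_cases i <;>
      simp only [Matrix.mulVec, dotProduct, Fin.sum_univ_succ, Fin.sum_univ_zero,
        hA, M0, Matrix.of_apply, Matrix.cons_val_zero, Matrix.cons_val_succ,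
        Matrix.cons_val_zero', Matrix.cons_val_succ',
        Pi.smul_apply, smul_eq_mul, add_zero] <;>
      push_cast <;>
      [linear_combination (3:ℂ) * hc4; linear_combination (-5:ℂ) * hc4;
       linear_combination (-4:ℂ) * hc4; linear_combination (3:ℂ) * hc4;
       linear_combination (3:ℂ) * hc4; linear_combination (-2:ℂ) * hc4;
       linear_combination (-2:ℂ) * hc4; linear_combination (0:ℂ) * hc4;
       linear_combination (0:ℂ) * hc4]

/-- Every root of the characteristic polynomial has modulus at most `rR`. -/
lemma root_abs_le {z : ℂ} (hz : (cpF 2 2 2).IsRoot z) : ‖z‖ ≤ rR := by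
  have hr6 : 6.6 < rR := rR_bounds.1
  have hsex := root_sextic hz
  rcases mul_eq_zero.mp hsex with h | hquart
  · rcases mul_eq_zero.mp h with h1 | h1
    · rw [sub_eq_zero.mp h1]; simp; linarith
    · rw [eq_neg_of_add_eq_zero_left h1]; simp; linarith
  · have ha : ((aR:ℂ))^2 - 8*(aR:ℂ) + 8 = 0 := by
      have h2 : ((aR:ℂ))^2 - 8*(aR:ℂ) + 8 = ((aR^2 - 8*aR + 8 : ℝ) : ℂ) := by push_cast; ring
      rw [aR_sq, Complex.ofReal_zero] at h2
      exact h2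
    have hfac : (z^2 - (aR:ℂ)*z + 1) * (z^2 - (8 - (aR:ℂ))*z + 1) = 0 := by
      linear_combination hquart - z^2 * ha
    rcases mul_eq_zero.mp hfac with hq | hq
    · have h2 : ((rR:ℂ))^2 - (aR:ℂ)*(rR:ℂ) + 1 = 0 := by
        have h3 : ((rR:ℂ))^2 - (aR:ℂ)*(rR:ℂ) + 1 = ((rR^2 - aR*rR + 1 : ℝ) : ℂ) := by
          push_cast; ring
        rw [rR_quad, Complex.ofReal_zero] at h3
        exact h3
      have hr : (z - (rR:ℂ)) * (z - ((aR - rR : ℝ):ℂ)) = 0 := by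
        push_cast
        linear_combination hq - h2
      rcases mul_eq_zero.mp hr with h3 | h3
      · rw [sub_eq_zero.mp h3, Complex.norm_real, Real.norm_eq_abs, abs_of_pos (by linarith : (0:ℝ) < rR)]
      · rw [sub_eq_zero.mp h3, Complex.norm_real, Real.norm_eq_abs, abs_of_nonneg aR_sub_rR_nonneg]
        exact aR_sub_rR_le
    · have hb1 : (0:ℝ) ≤ 8 - aR := by linarith [aR_bounds.2]
      have hb2 : 8 - aR ≤ 2 := by linarith [aR_bounds.1]
      have hzz : z^2 = (8 - (aR:ℂ))*z - 1 := by linear_combination hq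
      have ht0 : 0 ≤ ‖z‖ := norm_nonneg z
      have htt : ‖z‖ ^ 2 ≤ (8 - aR) * ‖z‖ + 1 := by
        have h4 : ‖z^2‖ = ‖(8 - (aR:ℂ))*z - 1‖ := by rw [hzz]
        rw [norm_pow] at h4
        calc ‖z‖ ^ 2 = ‖(8 - (aR:ℂ))*z - 1‖ := h4
          _ ≤ ‖(8 - (aR:ℂ))*z‖ + ‖(1:ℂ)‖ := norm_sub_le _ _
          _ = (8 - aR) * ‖z‖ + 1 := by
              rw [norm_mul, norm_one]
              congr 1
              rw [show ((8:ℂ) - (aR:ℂ)) = ((8 - aR : ℝ) : ℂ) by push_cast; ring,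
                Complex.norm_real, Real.norm_eq_abs, abs_of_nonneg hb1]
      nlinarith

end SpecRadAux2
/-- If `ρ` is the spectral radius of `F_{2,2,2}` (the maximum modulus of the complex
roots of its characteristic polynomial), then `ρ` is a real root of
`t⁴ − 8t³ + 10t² − 8t + 1` and `6 < ρ < 7`. -/
theorem specRad_F222 (ρ : ℝ)
    (hmem : ∃ z : ℂ, (cpF 2 2 2).IsRoot z ∧ ‖z‖ = ρ)
    (hmax : ∀ z : ℂ, (cpF 2 2 2).IsRoot z → ‖z‖ ≤ ρ) :
    ρ ^ 4 - 8 * ρ ^ 3 + 10 * ρ ^ 2 - 8 * ρ + 1 = 0 ∧ 6 < ρ ∧ ρ < 7 := by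
  obtain ⟨z₀, hz₀, habs⟩ := hmem
  have h1 : ρ ≤ rR := habs ▸ root_abs_le hz₀
  have h2 : rR ≤ ρ := by
    have h := hmax (rR : ℂ) rR_isRoot
    rwa [Complex.norm_real, Real.norm_eq_abs, abs_of_pos (by linarith [rR_bounds.1])] at h
  have hρ : ρ = rR := le_antisymm h1 h2
  refine ⟨?_, ?_, ?_⟩
  · rw [hρ]; linear_combination rR_quartic
  · rw [hρ]; linarith [rR_bounds.1]
  · rw [hρ]; linarith [rR_bounds.2]
end
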